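/- Let V₀ be an arbitrary smooth real-valued function on (0,∞) and d₉ a real constant. Let H be the Hamiltonian with potentials V₁ = 0, V₂(r) = d₉ − V₀(r), V₃ = 0, V₄ = 1/2, V₅ = 0, i.e. H = −(ħ²/2)Δ + V₀(r) + (d₉ − V₀(r))K + (1/2)(σ₁,p)(σ₂,p). Then the pseudo-scalar operator Y₃₀ = (1/2)(σ₁+σ₂, p) is an integral of motion: [H, Y₃₀] = 0. -/

import Mathlib

noncomputable section

open scoped BigOperators

/-- The spinor space `ℂ⁴ = ℂ² ⊗ ℂ²`, realized as functions on `Fin 2 × Fin 2`. -/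
abbrev Spinor : Type := Fin 2 × Fin 2 → ℂ

/-- Wave functions on `ℝ³` (in the statements they are restricted to functions
that are smooth away from the origin). -/
abbrev WaveFn : Type := (Fin 3 → ℝ) → Spinor

/-- Operators: `ℂ`-linear combinations and compositions are formed pointwise. -/
abbrev Op : Type := WaveFn → WaveFn

/-- The commutator `[A,B] = AB − BA`. -/
def opComm (A B : Op) : Op := fun ψ => A (B ψ) - B (A ψ)

/-- The identity operator. -/
def idOp : Op := fun ψ => ψ

/-- The Euclidean norm `r = |x|`. -/
def rfun (x : Fin 3 → ℝ) : ℝ := Real.sqrt (∑ k, x k ^ 2)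

/-- Multiplication by a radial function `f(r)`. -/
def mulR (f : ℝ → ℝ) : Op := fun ψ x => (f (rfun x) : ℂ) • ψ x

/-- The position operator `x_k` (multiplication by the k-th coordinate). -/
def xOp (k : Fin 3) : Op := fun ψ x => (x k : ℂ) • ψ x

/-- The momentum operator `p_k = -ihbar ∂/∂x_k`. -/
def pOp (hbar : ℝ) (k : Fin 3) : Op :=
  fun ψ x => (-(Complex.I * (hbar : ℂ))) • fderiv ℝ ψ x (Pi.single k 1)

/-- The Laplacian `Δ = Σ_k ∂²/∂x_k²`. -/
def lap : Op :=
  fun ψ x => ∑ k, fderiv ℝ (fun y => fderiv ℝ ψ y (Pi.single k 1)) x (Pi.single k 1)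

/-- The totally antisymmetric Levi-Civita symbol `ε_{ijk}` on `Fin 3`. -/
def eps (i j k : Fin 3) : ℂ :=
  ((j.1 : ℂ) - (i.1 : ℂ)) * ((k.1 : ℂ) - (i.1 : ℂ)) * ((k.1 : ℂ) - (j.1 : ℂ)) / 2

/-- The standard Pauli matrices `σ¹, σ², σ³`. -/
def pauli : Fin 3 → Matrix (Fin 2) (Fin 2) ℂ :=
  ![!![0, 1; 1, 0], !![0, -Complex.I; Complex.I, 0], !![1, 0; 0, -1]]

/-- `(σ₁)_k = σ^k ⊗ I₂`, acting on the first tensor factor. -/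
def sigma1 (k : Fin 3) : Op := fun ψ x ab => ∑ j, pauli k ab.1 j * ψ x (j, ab.2)

/-- `(σ₂)_k = I₂ ⊗ σ^k`, acting on the second tensor factor. -/
def sigma2 (k : Fin 3) : Op := fun ψ x ab => ∑ j, pauli k ab.2 j * ψ x (ab.1, j)

/-- Dot product of triples of operators: `(A,B) = Σ_k A_k B_k`. -/
def dot (A B : Fin 3 → Op) : Op := ∑ k, A k ∘ B k

/-- Cross product of triples of operators: `(A×B)_k = ε_{klm} A_l B_m`. -/
def cross (A B : Fin 3 → Op) (k : Fin 3) : Op := ∑ l, ∑ m, eps k l m • (A l ∘ B m)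

/-- The angular momentum `L_k = ε_{klm} x_l p_m`. -/
def LOp (hbar : ℝ) (k : Fin 3) : Op := ∑ l, ∑ m, eps k l m • (xOp l ∘ pOp hbar m)

/-- The spin-exchange operator `K = (σ₁,σ₂)`. -/
def KOp : Op := dot sigma1 sigma2

/-- `σ₁ + σ₂` componentwise. -/
def sigmaSum (k : Fin 3) : Op := sigma1 k + sigma2 k

/-- `σ₁ − σ₂` componentwise. -/
def sigmaDiff (k : Fin 3) : Op := sigma1 k - sigma2 k

/-- The general rotationally invariant two-spin Hamiltonian
`H = −(hbar²/2)Δ + V₀(r) + ½V₁(r)(σ₁+σ₂,L) + V₂(r)K + V₃(r)(x,σ₁)(x,σ₂)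
    + V₄(r)(σ₁,p)(σ₂,p) + ½V₅(r)[(σ₁,L)(σ₂,L)+(σ₂,L)(σ₁,L)]`. -/
def Ham (hbar : ℝ) (V₀ V₁ V₂ V₃ V₄ V₅ : ℝ → ℝ) : Op :=
  (-(hbar ^ 2 / 2) : ℂ) • lap + mulR V₀
    + ((1 : ℂ)/2) • (mulR V₁ ∘ dot sigmaSum (LOp hbar))
    + mulR V₂ ∘ KOp
    + mulR V₃ ∘ (dot xOp sigma1 ∘ dot xOp sigma2)
    + mulR V₄ ∘ (dot sigma1 (pOp hbar) ∘ dot sigma2 (pOp hbar))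
    + ((1 : ℂ)/2) • (mulR V₅ ∘ (dot sigma1 (LOp hbar) ∘ dot sigma2 (LOp hbar)
        + dot sigma2 (LOp hbar) ∘ dot sigma1 (LOp hbar)))


namespace S7

/-! ### Smoothness predicate and first-order derivative operator -/

def Sm (φ : WaveFn) : Prop := ∀ ⦃x : Fin 3 → ℝ⦄, x ≠ 0 → ContDiffAt ℝ (⊤ : ℕ∞) φ x

lemma Sm.diff {φ : WaveFn} (h : Sm φ) {x : Fin 3 → ℝ} (hx : x ≠ 0) :
    DifferentiableAt ℝ φ x := (h hx).differentiableAt (by simp)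

def Dop (v : Fin 3 → ℝ) (φ : WaveFn) : WaveFn := fun y => fderiv ℝ φ y v

lemma Dop_def (v : Fin 3 → ℝ) (φ : WaveFn) : Dop v φ = fun y => fderiv ℝ φ y v := rfl

lemma Sm.D {φ : WaveFn} (h : Sm φ) (v : Fin 3 → ℝ) : Sm (Dop v φ) := by
  intro x hx
  have h1 : ContDiffAt ℝ (⊤ : ℕ∞) (fderiv ℝ φ) x := (h hx).fderiv_right (by simp)
  exact (ContinuousLinearMap.apply ℝ Spinor v).contDiff.contDiffAt.comp x h1

lemma nhdsU {x : Fin 3 → ℝ} (hx : x ≠ 0) : {y : Fin 3 → ℝ | y ≠ 0} ∈ nhds x :=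
  isOpen_ne.mem_nhds hx

lemma D_local {φ₁ φ₂ : WaveFn} (h : ∀ ⦃y : Fin 3 → ℝ⦄, y ≠ 0 → φ₁ y = φ₂ y)
    {x : Fin 3 → ℝ} (hx : x ≠ 0) (v : Fin 3 → ℝ) : Dop v φ₁ x = Dop v φ₂ x := by
  have : φ₁ =ᶠ[nhds x] φ₂ := Filter.eventuallyEq_of_mem (nhdsU hx) h
  simp only [Dop, this.fderiv_eq]

lemma D_fderiv {φ : WaveFn} {x : Fin 3 → ℝ} (h : ContDiffAt ℝ (⊤ : ℕ∞) φ x) (v w : Fin 3 → ℝ) :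
    Dop v (Dop w φ) x = fderiv ℝ (fderiv ℝ φ) x v w := by
  have hd : DifferentiableAt ℝ (fderiv ℝ φ) x :=
    (h.fderiv_right (m := (⊤ : ℕ∞)) (by simp)).differentiableAt (by simp)
  have : Dop w φ = (ContinuousLinearMap.apply ℝ Spinor w) ∘ (fderiv ℝ φ) := rfl
  rw [Dop, this, fderiv_comp x (ContinuousLinearMap.apply ℝ Spinor w).differentiableAt hd]
  simp

lemma D_comm {φ : WaveFn} (h : Sm φ) {x : Fin 3 → ℝ} (hx : x ≠ 0) (v w : Fin 3 → ℝ) :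
    Dop v (Dop w φ) x = Dop w (Dop v φ) x := by
  rw [D_fderiv (h hx), D_fderiv (h hx)]
  exact (h hx).isSymmSndFDerivAt (by simp; exact WithTop.coe_le_coe.mpr le_top) v w

lemma D_clm (L : Spinor →L[ℂ] Spinor) {φ : WaveFn} {x : Fin 3 → ℝ}
    (h : DifferentiableAt ℝ φ x) (v : Fin 3 → ℝ) :
    Dop v (fun y => L (φ y)) x = L (Dop v φ x) := by
  have := fderiv_comp x (L.restrictScalars ℝ).differentiableAt h
  simp only [Dop]
  rw [show (fun y => L (φ y)) = (L.restrictScalars ℝ) ∘ φ from rfl, this,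
    (L.restrictScalars ℝ).fderiv]
  rfl

lemma D_add {φ χ : WaveFn} {x : Fin 3 → ℝ} (hφ : DifferentiableAt ℝ φ x)
    (hχ : DifferentiableAt ℝ χ x) (v : Fin 3 → ℝ) :
    Dop v (fun y => φ y + χ y) x = Dop v φ x + Dop v χ x := by
  simp [Dop, fderiv_fun_add hφ hχ]

lemma D_smul (c : ℂ) {φ : WaveFn} {x : Fin 3 → ℝ} (hφ : DifferentiableAt ℝ φ x)
    (v : Fin 3 → ℝ) : Dop v (fun y => c • φ y) x = c • Dop v φ x := by
  simp [Dop, fderiv_fun_const_smul hφ c]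

lemma D_sum {ι : Type*} (s : Finset ι) (φ : ι → WaveFn) {x : Fin 3 → ℝ}
    (h : ∀ i ∈ s, DifferentiableAt ℝ (φ i) x) (v : Fin 3 → ℝ) :
    Dop v (fun y => ∑ i ∈ s, φ i y) x = ∑ i ∈ s, Dop v (φ i) x := by
  simp [Dop, fderiv_fun_sum h]

lemma D_leibniz {g : (Fin 3 → ℝ) → ℂ} {φ : WaveFn} {x : Fin 3 → ℝ}
    (hg : DifferentiableAt ℝ g x) (hφ : DifferentiableAt ℝ φ x) (v : Fin 3 → ℝ) :
    Dop v (fun y => g y • φ y) x = g x • Dop v φ x + (fderiv ℝ g x v) • φ x := by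
  simp [Dop, fderiv_fun_smul hg hφ]

/-! ### Spin matrices as continuous linear maps -/

def S1 (k : Fin 3) : Spinor →L[ℂ] Spinor :=
  LinearMap.toContinuousLinearMap
  { toFun := fun v ab => ∑ j, pauli k ab.1 j * v (j, ab.2)
    map_add' := by intro v w; funext ab; simp [mul_add, Finset.sum_add_distrib]
    map_smul' := by intro c v; funext ab; simp [Finset.mul_sum, smul_eq_mul]; ring_nf }

def S2 (k : Fin 3) : Spinor →L[ℂ] Spinor :=
  LinearMap.toContinuousLinearMap
  { toFun := fun v ab => ∑ j, pauli k ab.2 j * v (ab.1, j)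
    map_add' := by intro v w; funext ab; simp [mul_add, Finset.sum_add_distrib]
    map_smul' := by intro c v; funext ab; simp [Finset.mul_sum, smul_eq_mul]; ring_nf }

def Kc : Spinor →L[ℂ] Spinor := ∑ k, (S1 k).comp (S2 k)

lemma S1_apply (k : Fin 3) (v : Spinor) (ab : Fin 2 × Fin 2) :
    S1 k v ab = ∑ j, pauli k ab.1 j * v (j, ab.2) := rfl
lemma S2_apply (k : Fin 3) (v : Spinor) (ab : Fin 2 × Fin 2) :
    S2 k v ab = ∑ j, pauli k ab.2 j * v (ab.1, j) := rfl

lemma M_comm (a b : Fin 3) (v : Spinor) : S1 a (S2 b v) = S2 b (S1 a v) := by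
  funext ab
  simp only [S1_apply, S2_apply, Finset.mul_sum, Fin.sum_univ_two]
  ring

lemma Kc_apply (w : Spinor) : Kc w = fun ab => 2 * w (ab.2, ab.1) - w ab := by
  funext ab
  obtain ⟨i, j⟩ := ab
  fin_cases i <;> fin_cases j <;>
    simp [Kc, S1_apply, S2_apply, pauli, Fin.sum_univ_three, Fin.sum_univ_two] <;>
    (try ring_nf) <;> (try simp [Complex.I_sq]) <;> (try ring_nf)

lemma M_singlet (a : Fin 3) (v : Spinor) :
    S1 a (v - Kc v) + S2 a (v - Kc v) = 0 := by
  funext ab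
  obtain ⟨i, j⟩ := ab
  fin_cases a <;> fin_cases i <;> fin_cases j <;>
    simp [S1_apply, S2_apply, Kc_apply, map_sub, Fin.sum_univ_two, pauli] <;>
    (try ring_nf) <;> (try simp [Complex.I_sq]) <;> (try ring_nf)

lemma M_Ksum (a : Fin 3) (v : Spinor) :
    Kc (S1 a v + S2 a v) = S1 a (Kc v) + S2 a (Kc v) := by
  funext ab
  obtain ⟨i, j⟩ := ab
  fin_cases a <;> fin_cases i <;> fin_cases j <;>
    simp [S1_apply, S2_apply, Kc_apply, Fin.sum_univ_two, pauli] <;>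
    (try ring_nf) <;> (try simp [Complex.I_sq]) <;> (try ring_nf)


/-! ### More smoothness closure lemmas -/

lemma Sm.clm (L : Spinor →L[ℂ] Spinor) {φ : WaveFn} (h : Sm φ) :
    Sm (fun y => L (φ y)) := fun x hx =>
  (L.restrictScalars ℝ).contDiff.contDiffAt.comp x (h hx)

lemma Sm.add {φ χ : WaveFn} (hφ : Sm φ) (hχ : Sm χ) : Sm (fun y => φ y + χ y) :=
  fun x hx => (hφ hx).add (hχ hx)

lemma Sm.smul (c : ℂ) {φ : WaveFn} (h : Sm φ) : Sm (fun y => c • φ y) :=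
  fun x hx => (h hx).const_smul c

lemma Sm.sum {ι : Type*} (s : Finset ι) (φ : ι → WaveFn)
    (h : ∀ i ∈ s, Sm (φ i)) : Sm (fun y => ∑ i ∈ s, φ i y) :=
  fun x hx => ContDiffAt.sum (fun i hi => h i hi hx)

lemma Sm.gsmul {g : (Fin 3 → ℝ) → ℂ} (hg : ∀ ⦃x : Fin 3 → ℝ⦄, x ≠ 0 →
    ContDiffAt ℝ (⊤ : ℕ∞) g x) {φ : WaveFn} (h : Sm φ) :
    Sm (fun y => g y • φ y) := by
  intro x hx
  have h1 : ContDiffAt ℝ (⊤ : ℕ∞)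
      (fun y => (ContinuousLinearMap.lsmul ℝ ℂ (g y) : Spinor →L[ℝ] Spinor)) x :=
    (((ContinuousLinearMap.lsmul ℝ ℂ : ℂ →L[ℝ] Spinor →L[ℝ] Spinor)).contDiff.contDiffAt).comp
      x (hg hx)
  exact h1.clm_apply (h hx)

/-! ### p operator lemmas -/

variable {hbar : ℝ}

lemma p_eq (a : Fin 3) (φ : WaveFn) :
    pOp hbar a φ = fun y => (-(Complex.I * hbar)) • Dop (Pi.single a 1) φ y := rfl

lemma Sm.p (a : Fin 3) {φ : WaveFn} (h : Sm φ) : Sm (pOp hbar a φ) := by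
  rw [p_eq]; exact (h.D _).smul _

lemma p_local {φ₁ φ₂ : WaveFn} (h : ∀ ⦃y : Fin 3 → ℝ⦄, y ≠ 0 → φ₁ y = φ₂ y)
    {x : Fin 3 → ℝ} (hx : x ≠ 0) (a : Fin 3) : pOp hbar a φ₁ x = pOp hbar a φ₂ x := by
  simp only [p_eq]; rw [D_local h hx]

lemma p_comm {φ : WaveFn} (h : Sm φ) {x : Fin 3 → ℝ} (hx : x ≠ 0) (a b : Fin 3) :
    pOp hbar a (pOp hbar b φ) x = pOp hbar b (pOp hbar a φ) x := by
  simp only [p_eq]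
  rw [D_smul _ ((h.D _).diff hx), D_smul _ ((h.D _).diff hx), D_comm h hx]

lemma p_clm (L : Spinor →L[ℂ] Spinor) {φ : WaveFn} {x : Fin 3 → ℝ}
    (h : DifferentiableAt ℝ φ x) (a : Fin 3) :
    pOp hbar a (fun y => L (φ y)) x = L (pOp hbar a φ x) := by
  simp only [p_eq, D_clm L h, map_smul]

lemma p_add {φ χ : WaveFn} {x : Fin 3 → ℝ} (hφ : DifferentiableAt ℝ φ x)
    (hχ : DifferentiableAt ℝ χ x) (a : Fin 3) :
    pOp hbar a (fun y => φ y + χ y) x = pOp hbar a φ x + pOp hbar a χ x := by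
  simp only [p_eq, D_add hφ hχ, smul_add]

lemma p_smul (c : ℂ) {φ : WaveFn} {x : Fin 3 → ℝ} (hφ : DifferentiableAt ℝ φ x)
    (a : Fin 3) : pOp hbar a (fun y => c • φ y) x = c • pOp hbar a φ x := by
  simp only [p_eq, D_smul c hφ, smul_comm _ c]

lemma p_sum {ι : Type*} (s : Finset ι) (φ : ι → WaveFn) {x : Fin 3 → ℝ}
    (h : ∀ i ∈ s, DifferentiableAt ℝ (φ i) x) (a : Fin 3) :
    pOp hbar a (fun y => ∑ i ∈ s, φ i y) x = ∑ i ∈ s, pOp hbar a (φ i) x := by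
  simp only [p_eq, D_sum s φ h, Finset.smul_sum]

lemma p_leibniz {g : (Fin 3 → ℝ) → ℂ} {φ : WaveFn} {x : Fin 3 → ℝ}
    (hg : DifferentiableAt ℝ g x) (hφ : DifferentiableAt ℝ φ x) (a : Fin 3) :
    pOp hbar a (fun y => g y • φ y) x
      = g x • pOp hbar a φ x
        + ((-(Complex.I * hbar)) * fderiv ℝ g x (Pi.single a 1)) • φ x := by
  simp only [p_eq, D_leibniz hg hφ, smul_add, smul_comm _ (g x), smul_smul]


/-! ### The operators `Q σ = Σ_a σ_a p_a` -/

def Q (σ : Fin 3 → Spinor →L[ℂ] Spinor) (hbar : ℝ) (φ : WaveFn) : WaveFn :=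
  fun y => ∑ a, σ a (pOp hbar a φ y)

lemma Q_def (σ : Fin 3 → Spinor →L[ℂ] Spinor) (hbar : ℝ) (φ : WaveFn) :
    Q σ hbar φ = fun y => ∑ a, σ a (pOp hbar a φ y) := rfl

lemma Sm.Q (σ : Fin 3 → Spinor →L[ℂ] Spinor) {φ : WaveFn} (h : Sm φ) :
    Sm (S7.Q σ hbar φ) :=
  Sm.sum Finset.univ (fun a => fun y => σ a (pOp hbar a φ y))
    (fun a _ => (h.p a).clm (σ a))

lemma Q_local (σ : Fin 3 → Spinor →L[ℂ] Spinor) {φ₁ φ₂ : WaveFn}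
    (h : ∀ ⦃y : Fin 3 → ℝ⦄, y ≠ 0 → φ₁ y = φ₂ y) {x : Fin 3 → ℝ} (hx : x ≠ 0) :
    Q σ hbar φ₁ x = Q σ hbar φ₂ x := by
  simp only [Q_def]
  refine Finset.sum_congr rfl fun a _ => ?_
  rw [p_local h hx]

lemma Q_add (σ : Fin 3 → Spinor →L[ℂ] Spinor) {φ χ : WaveFn} {x : Fin 3 → ℝ}
    (hφ : DifferentiableAt ℝ φ x) (hχ : DifferentiableAt ℝ χ x) :
    Q σ hbar (fun y => φ y + χ y) x = Q σ hbar φ x + Q σ hbar χ x := by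
  simp only [Q_def, ← Finset.sum_add_distrib]
  refine Finset.sum_congr rfl fun a _ => ?_
  rw [p_add hφ hχ, map_add]

lemma Q_smul (σ : Fin 3 → Spinor →L[ℂ] Spinor) (c : ℂ) {φ : WaveFn} {x : Fin 3 → ℝ}
    (hφ : DifferentiableAt ℝ φ x) :
    Q σ hbar (fun y => c • φ y) x = c • Q σ hbar φ x := by
  simp only [Q_def, Finset.smul_sum]
  refine Finset.sum_congr rfl fun a _ => ?_
  rw [p_smul c hφ, map_smul]

lemma Q_g (σ : Fin 3 → Spinor →L[ℂ] Spinor) {g : (Fin 3 → ℝ) → ℂ} {φ : WaveFn}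
    {x : Fin 3 → ℝ} (hg : DifferentiableAt ℝ g x) (hφ : DifferentiableAt ℝ φ x) :
    Q σ hbar (fun y => g y • φ y) x
      = g x • Q σ hbar φ x
        + ∑ a, ((-(Complex.I * hbar)) * fderiv ℝ g x (Pi.single a 1)) • σ a (φ x) := by
  simp only [Q_def, Finset.smul_sum, ← Finset.sum_add_distrib]
  refine Finset.sum_congr rfl fun a _ => ?_
  rw [p_leibniz hg hφ, map_add, map_smul, map_smul]

lemma QQ_comm {φ : WaveFn} (h : Sm φ) {x : Fin 3 → ℝ} (hx : x ≠ 0) :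
    Q S1 hbar (Q S2 hbar φ) x = Q S2 hbar (Q S1 hbar φ) x := by
  have e1 : Q S1 hbar (Q S2 hbar φ) x
      = ∑ a, ∑ b, S1 a (S2 b (pOp hbar a (pOp hbar b φ) x)) := by
    simp only [Q_def]
    refine Finset.sum_congr rfl fun a _ => ?_
    rw [p_sum Finset.univ (fun b => fun y => S2 b (pOp hbar b φ y))
      (fun b _ => ((h.p b).clm (S2 b)).diff hx), map_sum]
    refine Finset.sum_congr rfl fun b _ => ?_
    rw [p_clm (S2 b) ((h.p b).diff hx)]
  have e2 : Q S2 hbar (Q S1 hbar φ) x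
      = ∑ b, ∑ a, S2 b (S1 a (pOp hbar b (pOp hbar a φ) x)) := by
    simp only [Q_def]
    refine Finset.sum_congr rfl fun b _ => ?_
    rw [p_sum Finset.univ (fun a => fun y => S1 a (pOp hbar a φ y))
      (fun a _ => ((h.p a).clm (S1 a)).diff hx), map_sum]
    refine Finset.sum_congr rfl fun a _ => ?_
    rw [p_clm (S1 a) ((h.p a).diff hx)]
  rw [e1, e2, Finset.sum_comm]
  refine Finset.sum_congr rfl fun b _ => Finset.sum_congr rfl fun a _ => ?_
  rw [M_comm, p_comm h hx]

lemma QK {φ : WaveFn} (h : Sm φ) {x : Fin 3 → ℝ} (hx : x ≠ 0) :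
    Q S1 hbar (fun y => Kc (φ y)) x + Q S2 hbar (fun y => Kc (φ y)) x
      = Kc (Q S1 hbar φ x + Q S2 hbar φ x) := by
  simp only [Q_def, ← Finset.sum_add_distrib, map_sum]
  refine Finset.sum_congr rfl fun a _ => ?_
  rw [p_clm Kc (h.diff hx)]
  exact (M_Ksum a _).symm

/-! ### Laplacian lemmas -/

lemma lap_eq (φ : WaveFn) :
    lap φ = fun y => ∑ k, Dop (Pi.single k 1) (Dop (Pi.single k 1) φ) y := rfl

lemma Sm.lap {φ : WaveFn} (h : Sm φ) : Sm (lap φ) := by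
  rw [lap_eq]
  exact Sm.sum Finset.univ _ (fun k _ => (h.D _).D _)

lemma lap_local {φ₁ φ₂ : WaveFn} (h : ∀ ⦃y : Fin 3 → ℝ⦄, y ≠ 0 → φ₁ y = φ₂ y)
    {x : Fin 3 → ℝ} (hx : x ≠ 0) : lap φ₁ x = lap φ₂ x := by
  simp only [lap_eq]
  refine Finset.sum_congr rfl fun k _ => ?_
  exact D_local (fun y hy => D_local h hy _) hx _

lemma lap_add {φ χ : WaveFn} (hφ : Sm φ) (hχ : Sm χ) {x : Fin 3 → ℝ} (hx : x ≠ 0) :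
    lap (fun y => φ y + χ y) x = lap φ x + lap χ x := by
  simp only [lap_eq, ← Finset.sum_add_distrib]
  refine Finset.sum_congr rfl fun k _ => ?_
  rw [D_local (fun y hy => D_add (hφ.diff hy) (hχ.diff hy) _) hx,
    D_add ((hφ.D _).diff hx) ((hχ.D _).diff hx)]

lemma lap_smul (c : ℂ) {φ : WaveFn} (hφ : Sm φ) {x : Fin 3 → ℝ} (hx : x ≠ 0) :
    lap (fun y => c • φ y) x = c • lap φ x := by
  simp only [lap_eq, Finset.smul_sum]
  refine Finset.sum_congr rfl fun k _ => ?_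
  rw [D_local (fun y hy => D_smul c (hφ.diff hy) _) hx, D_smul c ((hφ.D _).diff hx)]

lemma lap_clm (L : Spinor →L[ℂ] Spinor) {φ : WaveFn} (hφ : Sm φ) {x : Fin 3 → ℝ}
    (hx : x ≠ 0) : lap (fun y => L (φ y)) x = L (lap φ x) := by
  simp only [lap_eq, map_sum]
  refine Finset.sum_congr rfl fun k _ => ?_
  rw [D_local (fun y hy => D_clm L (hφ.diff hy) _) hx, D_clm L ((hφ.D _).diff hx)]

lemma lap_p {φ : WaveFn} (h : Sm φ) {x : Fin 3 → ℝ} (hx : x ≠ 0) (a : Fin 3) :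
    lap (pOp hbar a φ) x = pOp hbar a (lap φ) x := by
  have key : ∀ k : Fin 3, Dop (Pi.single k 1) (Dop (Pi.single k 1) (Dop (Pi.single a 1) φ)) x
      = Dop (Pi.single a 1) (Dop (Pi.single k 1) (Dop (Pi.single k 1) φ)) x := by
    intro k
    rw [D_local (fun y hy => D_comm h hy _ _) hx, D_comm (h.D (Pi.single k 1)) hx]
  have e1 : lap (Dop (Pi.single a 1) φ) x
      = ∑ k, Dop (Pi.single a 1) (Dop (Pi.single k 1) (Dop (Pi.single k 1) φ)) x := by
    rw [lap_eq]
    exact Finset.sum_congr rfl fun k _ => key k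
  have e2 : Dop (Pi.single a 1) (lap φ) x
      = ∑ k, Dop (Pi.single a 1) (Dop (Pi.single k 1) (Dop (Pi.single k 1) φ)) x := by
    rw [lap_eq, D_sum Finset.univ _ (fun k _ => ((h.D _).D _).diff hx)]
  have e3 : pOp hbar a (lap φ) x
      = (-(Complex.I * hbar)) • Dop (Pi.single a 1) (lap φ) x := rfl
  rw [p_eq, lap_smul (-(Complex.I * hbar)) (h.D _) hx, e3, e1, e2]

lemma lap_Q (σ : Fin 3 → Spinor →L[ℂ] Spinor) {φ : WaveFn} (h : Sm φ)
    {x : Fin 3 → ℝ} (hx : x ≠ 0) :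
    lap (Q σ hbar φ) x = Q σ hbar (lap φ) x := by
  have e1 : lap (Q σ hbar φ) x = ∑ a, lap (fun y => σ a (pOp hbar a φ y)) x := by
    rw [Q_def]
    induction (Finset.univ : Finset (Fin 3)) using Finset.induction with
    | empty => simp [lap_eq, Dop_def, fderiv_const]
    | insert i s hni ih =>
        have hs : Sm (fun y => ∑ b ∈ s, σ b (pOp hbar b φ y)) :=
          Sm.sum s _ (fun b _ => (h.p b).clm (σ b))
        simp only [Finset.sum_insert hni]
        rw [lap_add ((h.p i).clm (σ i)) hs hx, ih]
  rw [e1, Q_def]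
  refine Finset.sum_congr rfl fun a _ => ?_
  rw [lap_clm (σ a) (h.p a) hx, lap_p h hx a]


/-! ### Radial functions -/

lemma g_smooth {V : ℝ → ℝ} (hV : ContDiffOn ℝ (⊤ : ℕ∞) V (Set.Ioi (0 : ℝ)))
    {x : Fin 3 → ℝ} (hx : x ≠ 0) :
    ContDiffAt ℝ (⊤ : ℕ∞) (fun y => ((V (rfun y) : ℝ) : ℂ)) x := by
  obtain ⟨k, hk⟩ : ∃ k, x k ≠ 0 := by
    by_contra hcon
    push_neg at hcon
    exact hx (funext hcon)
  have hpos : 0 < ∑ k, x k ^ 2 :=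
    Finset.sum_pos' (fun i _ => sq_nonneg _) ⟨k, Finset.mem_univ _, by positivity⟩
  have hsumsq : ContDiff ℝ (⊤ : ℕ∞) (fun y : Fin 3 → ℝ => ∑ k, y k ^ 2) :=
    ContDiff.sum fun i _ => (contDiff_apply ℝ ℝ i).pow 2
  have hr : ContDiffAt ℝ (⊤ : ℕ∞) rfun x := by
    have h1 : ContDiffAt ℝ (⊤ : ℕ∞) Real.sqrt (∑ k, x k ^ 2) :=
      Real.contDiffAt_sqrt hpos.ne'
    exact h1.comp x hsumsq.contDiffAt
  have hrpos : rfun x ∈ Set.Ioi (0 : ℝ) := Real.sqrt_pos.mpr hpos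
  have hVat : ContDiffAt ℝ (⊤ : ℕ∞) V (rfun x) :=
    hV.contDiffAt (Ioi_mem_nhds hrpos)
  exact (Complex.ofRealCLM.contDiff.contDiffAt).comp x (hVat.comp x hr)

/-! ### Unfolding the operators in the statement -/

lemma dot_apply (A B : Fin 3 → Op) (φ : WaveFn) (x : Fin 3 → ℝ) :
    dot A B φ x = ∑ k, A k (B k φ) x := by
  simp [dot, Finset.sum_apply, Function.comp]

lemma sigma1_eq (k : Fin 3) (φ : WaveFn) (x : Fin 3 → ℝ) :
    sigma1 k φ x = S1 k (φ x) := rfl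

lemma sigma2_eq (k : Fin 3) (φ : WaveFn) (x : Fin 3 → ℝ) :
    sigma2 k φ x = S2 k (φ x) := rfl

lemma KOp_eq (φ : WaveFn) (x : Fin 3 → ℝ) : KOp φ x = Kc (φ x) := by
  simp [KOp, dot_apply, sigma1_eq, sigma2_eq, Kc, ContinuousLinearMap.sum_apply]

lemma dotQ1 (φ : WaveFn) : dot sigma1 (pOp hbar) φ = Q S1 hbar φ := by
  funext x
  simp [dot_apply, Q_def, sigma1_eq]

lemma dotQ2 (φ : WaveFn) : dot sigma2 (pOp hbar) φ = Q S2 hbar φ := by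
  funext x
  simp [dot_apply, Q_def, sigma2_eq]

lemma dotY (φ : WaveFn) (x : Fin 3 → ℝ) :
    dot sigmaSum (pOp hbar) φ x = Q S1 hbar φ x + Q S2 hbar φ x := by
  simp [dot_apply, Q_def, sigmaSum, sigma1_eq, sigma2_eq, Pi.add_apply,
    Finset.sum_add_distrib]

lemma Ham_apply (V₀ : ℝ → ℝ) (d₉ : ℝ) (φ : WaveFn) (x : Fin 3 → ℝ) :
    Ham hbar V₀ (fun _ => 0) (fun r => d₉ - V₀ r) (fun _ => 0) (fun _ => 1/2)
      (fun _ => 0) φ x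
    = (-(hbar ^ 2 / 2) : ℂ) • lap φ x + (V₀ (rfun x) : ℂ) • φ x
      + ((d₉ - V₀ (rfun x) : ℝ) : ℂ) • Kc (φ x)
      + ((1 : ℂ)/2) • Q S1 hbar (Q S2 hbar φ) x := by
  have h2 : ((1/2 : ℝ) : ℂ) = (1 : ℂ)/2 := by norm_num
  simp [Ham, mulR, KOp_eq, dotQ1, dotQ2, Pi.add_apply, Pi.smul_apply,
    Function.comp, h2]

lemma Y_apply (φ : WaveFn) (x : Fin 3 → ℝ) :
    (((1 : ℂ)/2) • dot sigmaSum (pOp hbar)) φ x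
      = ((1 : ℂ)/2) • (Q S1 hbar φ x + Q S2 hbar φ x) := by
  simp [Pi.smul_apply, dotY]


lemma Q_add4 (σ : Fin 3 → Spinor →L[ℂ] Spinor) {A B C D : WaveFn} {x : Fin 3 → ℝ}
    (hA : DifferentiableAt ℝ A x) (hB : DifferentiableAt ℝ B x)
    (hC : DifferentiableAt ℝ C x) (hD : DifferentiableAt ℝ D x) :
    Q σ hbar (fun y => A y + B y + C y + D y) x
      = Q σ hbar A x + Q σ hbar B x + Q σ hbar C x + Q σ hbar D x := by
  have e1 : Q σ hbar (fun y => A y + B y + C y + D y) x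
      = Q σ hbar (fun y => A y + B y + C y) x + Q σ hbar D x :=
    Q_add σ (φ := fun y => A y + B y + C y) ((hA.add hB).add hC) hD
  have e2 : Q σ hbar (fun y => A y + B y + C y) x
      = Q σ hbar (fun y => A y + B y) x + Q σ hbar C x :=
    Q_add σ (φ := fun y => A y + B y) (hA.add hB) hC
  rw [e1, e2, Q_add σ hA hB]

end S7

open S7

/-- for `V₁ = 0`, `V₂ = d₉ − V₀`, `V₃ = 0`, `V₄ = 1/2`, `V₅ = 0` and arbitrary
smooth `V₀`, the operator `Y₃₀ = ½(σ₁+σ₂,p)` is an integral of motion. -/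
theorem statement7 (hbar : ℝ) (hhbar : hbar ≠ 0) (V₀ : ℝ → ℝ) (d₉ : ℝ)
    (hV₀ : ContDiffOn ℝ (⊤ : ℕ∞) V₀ (Set.Ioi (0 : ℝ)))
    (ψ : WaveFn) (hψ : ContDiffOn ℝ (⊤ : ℕ∞) ψ {x : Fin 3 → ℝ | x ≠ 0})
    (x : Fin 3 → ℝ) (hx : x ≠ 0) :
    opComm
      (Ham hbar V₀ (fun _ => 0) (fun r => d₉ - V₀ r) (fun _ => 0)
        (fun _ => 1 / 2) (fun _ => 0))
      (((1 : ℂ)/2) • dot sigmaSum (pOp hbar)) ψ x = 0 := by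
  classical
  -- smoothness of everything in sight
  have hSψ : Sm ψ := fun y hy => hψ.contDiffAt (nhdsU hy)
  have hgx : ∀ ⦃y : Fin 3 → ℝ⦄, y ≠ 0 →
      ContDiffAt ℝ (⊤ : ℕ∞) (fun z => ((V₀ (rfun z) : ℝ) : ℂ)) y :=
    fun y hy => g_smooth hV₀ hy
  have hV2 : ContDiffOn ℝ (⊤ : ℕ∞) (fun r => d₉ - V₀ r) (Set.Ioi (0 : ℝ)) :=
    contDiffOn_const.sub hV₀
  have hg2x : ∀ ⦃y : Fin 3 → ℝ⦄, y ≠ 0 →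
      ContDiffAt ℝ (⊤ : ℕ∞) (fun z => ((d₉ - V₀ (rfun z) : ℝ) : ℂ)) y :=
    fun y hy => g_smooth hV2 hy
  have hQ1 : Sm (Q S1 hbar ψ) := hSψ.Q S1
  have hQ2 : Sm (Q S2 hbar ψ) := hSψ.Q S2
  have hK : Sm (fun y => Kc (ψ y)) := hSψ.clm Kc
  have hL : Sm (lap ψ) := hSψ.lap
  have hW : Sm (Q S1 hbar (Q S2 hbar ψ)) := hQ2.Q S1
  -- derivative of the two radial coefficients
  have hg2d : ∀ v : Fin 3 → ℝ,
      fderiv ℝ (fun z => ((d₉ - V₀ (rfun z) : ℝ) : ℂ)) x v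
        = -(fderiv ℝ (fun z => ((V₀ (rfun z) : ℝ) : ℂ)) x v) := by
    intro v
    have e : (fun z : Fin 3 → ℝ => ((d₉ - V₀ (rfun z) : ℝ) : ℂ))
        = fun z => (d₉ : ℂ) - ((V₀ (rfun z) : ℝ) : ℂ) := by
      funext z; push_cast; ring
    rw [e, fderiv_const_sub]
    simp
  -- rewrite both applications of the operators
  have hYeq : (((1 : ℂ)/2) • dot sigmaSum (pOp hbar)) ψ
      = fun y => ((1 : ℂ)/2) • (Q S1 hbar ψ y + Q S2 hbar ψ y) :=
    funext fun y => Y_apply ψ y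
  have hHeq : Ham hbar V₀ (fun _ => 0) (fun r => d₉ - V₀ r) (fun _ => 0)
        (fun _ => 1 / 2) (fun _ => 0) ψ
      = fun y => (-(hbar ^ 2 / 2) : ℂ) • lap ψ y
          + ((V₀ (rfun y) : ℝ) : ℂ) • ψ y
          + ((d₉ - V₀ (rfun y) : ℝ) : ℂ) • Kc (ψ y)
          + ((1 : ℂ)/2) • Q S1 hbar (Q S2 hbar ψ) y :=
    funext fun y => Ham_apply V₀ d₉ ψ y
  have hYs : Sm (fun y => ((1 : ℂ)/2) • (Q S1 hbar ψ y + Q S2 hbar ψ y)) :=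
    (hQ1.add hQ2).smul _
  -- compute both sides
  show Ham hbar V₀ (fun _ => 0) (fun r => d₉ - V₀ r) (fun _ => 0)
        (fun _ => 1 / 2) (fun _ => 0) ((((1 : ℂ)/2) • dot sigmaSum (pOp hbar)) ψ) x
      - (((1 : ℂ)/2) • dot sigmaSum (pOp hbar))
        (Ham hbar V₀ (fun _ => 0) (fun r => d₉ - V₀ r) (fun _ => 0)
          (fun _ => 1 / 2) (fun _ => 0) ψ) x = 0
  rw [hYeq, hHeq, sub_eq_zero, Ham_apply, Y_apply]
  -- expansion of `Q σ` applied to the four-term Hamiltonian output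
  have hQH : ∀ σ : Fin 3 → Spinor →L[ℂ] Spinor,
      Q σ hbar (fun y => (-(hbar ^ 2 / 2) : ℂ) • lap ψ y + ((V₀ (rfun y) : ℝ) : ℂ) • ψ y
        + ((d₉ - V₀ (rfun y) : ℝ) : ℂ) • Kc (ψ y)
        + ((1 : ℂ)/2) • Q S1 hbar (Q S2 hbar ψ) y) x
      = (-(hbar ^ 2 / 2) : ℂ) • Q σ hbar (lap ψ) x
        + (((V₀ (rfun x) : ℝ) : ℂ) • Q σ hbar ψ x
          + ∑ a, ((-(Complex.I * hbar))
              * fderiv ℝ (fun z => ((V₀ (rfun z) : ℝ) : ℂ)) x (Pi.single a 1)) • σ a (ψ x))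
        + (((d₉ - V₀ (rfun x) : ℝ) : ℂ) • Q σ hbar (fun y => Kc (ψ y)) x
          + ∑ a, ((-(Complex.I * hbar))
              * fderiv ℝ (fun z => ((d₉ - V₀ (rfun z) : ℝ) : ℂ)) x (Pi.single a 1))
                • σ a (Kc (ψ x)))
        + ((1 : ℂ)/2) • Q σ hbar (Q S1 hbar (Q S2 hbar ψ)) x := by
    intro σ
    refine (Q_add4 σ (A := fun y => (-(hbar ^ 2 / 2) : ℂ) • lap ψ y)
        (B := fun y => ((V₀ (rfun y) : ℝ) : ℂ) • ψ y)
        (C := fun y => ((d₉ - V₀ (rfun y) : ℝ) : ℂ) • Kc (ψ y))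
        (D := fun y => ((1 : ℂ)/2) • Q S1 hbar (Q S2 hbar ψ) y)
        ((hL.smul _).diff hx) ((Sm.gsmul hgx hSψ).diff hx)
        ((Sm.gsmul hg2x hK).diff hx) ((hW.smul _).diff hx)).trans ?_
    rw [Q_smul σ _ (hL.diff hx),
      Q_g σ ((hgx hx).differentiableAt (by simp)) (hSψ.diff hx),
      Q_g σ ((hg2x hx).differentiableAt (by simp)) (hK.diff hx),
      Q_smul σ _ (hW.diff hx)]
  -- Laplacian of Y ψ
  have hlapY : lap (fun y => ((1 : ℂ)/2) • (Q S1 hbar ψ y + Q S2 hbar ψ y)) x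
      = ((1 : ℂ)/2) • (Q S1 hbar (lap ψ) x + Q S2 hbar (lap ψ) x) := by
    refine (lap_smul ((1 : ℂ)/2)
      (φ := fun y => Q S1 hbar ψ y + Q S2 hbar ψ y) (hQ1.add hQ2) hx).trans ?_
    rw [lap_add hQ1 hQ2 hx, lap_Q S1 hSψ hx, lap_Q S2 hSψ hx]
  -- K of Y ψ
  have hKY : Kc (((1 : ℂ)/2) • (Q S1 hbar ψ x + Q S2 hbar ψ x))
      = ((1 : ℂ)/2) • (Q S1 hbar (fun y => Kc (ψ y)) x
        + Q S2 hbar (fun y => Kc (ψ y)) x) := by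
    rw [map_smul]
    exact congrArg _ (QK hSψ hx).symm
  -- (σ₁,p)(σ₂,p) applied to Y ψ
  have hQ2Yfun : ∀ ⦃y : Fin 3 → ℝ⦄, y ≠ 0 →
      Q S2 hbar (fun z => ((1 : ℂ)/2) • (Q S1 hbar ψ z + Q S2 hbar ψ z)) y
        = ((1 : ℂ)/2) • (Q S2 hbar (Q S1 hbar ψ) y + Q S2 hbar (Q S2 hbar ψ) y) := by
    intro y hy
    refine (Q_smul S2 ((1 : ℂ)/2)
      (φ := fun z => Q S1 hbar ψ z + Q S2 hbar ψ z) ((hQ1.add hQ2).diff hy)).trans ?_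
    rw [Q_add S2 (φ := Q S1 hbar ψ) (χ := Q S2 hbar ψ) (hQ1.diff hy) (hQ2.diff hy)]
  have hQ12Y : Q S1 hbar (Q S2 hbar
        (fun z => ((1 : ℂ)/2) • (Q S1 hbar ψ z + Q S2 hbar ψ z))) x
      = ((1 : ℂ)/2) • (Q S1 hbar (Q S1 hbar (Q S2 hbar ψ)) x
          + Q S2 hbar (Q S1 hbar (Q S2 hbar ψ)) x) := by
    rw [Q_local S1 hQ2Yfun hx]
    refine (Q_smul S1 ((1 : ℂ)/2)
      (φ := fun y => Q S2 hbar (Q S1 hbar ψ) y + Q S2 hbar (Q S2 hbar ψ) y)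
      (((hQ1.Q S2).add (hQ2.Q S2)).diff hx)).trans ?_
    rw [Q_add S1 (φ := Q S2 hbar (Q S1 hbar ψ)) (χ := Q S2 hbar (Q S2 hbar ψ))
      ((hQ1.Q S2).diff hx) ((hQ2.Q S2).diff hx)]
    have e1 : Q S1 hbar (Q S2 hbar (Q S1 hbar ψ)) x
        = Q S1 hbar (Q S1 hbar (Q S2 hbar ψ)) x :=
      Q_local S1 (fun y hy => (QQ_comm hSψ hy).symm) hx
    have e2 : Q S1 hbar (Q S2 hbar (Q S2 hbar ψ)) x
        = Q S2 hbar (Q S1 hbar (Q S2 hbar ψ)) x := QQ_comm hQ2 hx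
    rw [e1, e2]
  -- the residual radial-derivative terms cancel by the singlet identity
  have hsum : (∑ a, ((-(Complex.I * hbar))
          * fderiv ℝ (fun z => ((V₀ (rfun z) : ℝ) : ℂ)) x (Pi.single a 1)) • S1 a (ψ x))
      + (∑ a, ((-(Complex.I * hbar))
          * fderiv ℝ (fun z => ((V₀ (rfun z) : ℝ) : ℂ)) x (Pi.single a 1)) • S2 a (ψ x))
      + ((∑ a, ((-(Complex.I * hbar))
          * fderiv ℝ (fun z => ((d₉ - V₀ (rfun z) : ℝ) : ℂ)) x (Pi.single a 1))
            • S1 a (Kc (ψ x)))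
        + (∑ a, ((-(Complex.I * hbar))
          * fderiv ℝ (fun z => ((d₉ - V₀ (rfun z) : ℝ) : ℂ)) x (Pi.single a 1))
            • S2 a (Kc (ψ x)))) = 0 := by
    simp only [hg2d]
    rw [← Finset.sum_add_distrib, ← Finset.sum_add_distrib, ← Finset.sum_add_distrib]
    refine Finset.sum_eq_zero fun a _ => ?_
    have h0 := M_singlet a (ψ x)
    simp only [map_sub] at h0
    linear_combination (norm := module)
      ((-(Complex.I * hbar))
        * fderiv ℝ (fun z => ((V₀ (rfun z) : ℝ) : ℂ)) x (Pi.single a 1)) • h0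
  rw [hlapY, hKY, hQ12Y, hQH S1, hQH S2]
  linear_combination (norm := module) (-((1 : ℂ)/2)) • hsum
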